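/- There is a bijection between Schröder trees with n leaves and well-weighted binary plane trees with n leaves, for every n ≥ 1; in particular the two sets are equinumerous. -/

import Mathlib

/-- A Schröder tree: a single node, or a root with at least two ordered subtrees,
encoded as two subtrees plus a (possibly empty) list of further subtrees. -/
inductive SchTree : Type
  | leaf : SchTree
  | node : SchTree → SchTree → List SchTree → SchTree

mutual
/-- Number of leaves of a Schröder tree. -/
def SchTree.leaves : SchTree → ℕ
  | .leaf => 1
  | .node t₁ t₂ ts => t₁.leaves + t₂.leaves + SchTree.leavesList ts
def SchTree.leavesList : List SchTree → ℕ
  | [] => 0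
  | t :: ts => t.leaves + SchTree.leavesList ts
end

/-- The number of Schröder trees with `n` leaves. -/
noncomputable def schS (n : ℕ) : ℕ := Nat.card {t : SchTree // t.leaves = n}

/-- A weighted binary plane tree: a leaf or a root with weight `r` and two subtrees. -/
inductive WTree : Type
  | leaf : WTree
  | node : ℕ → WTree → WTree → WTree

/-- Number of leaves. -/
def WTree.leaves : WTree → ℕ
  | .leaf => 1
  | .node _ t₁ t₂ => t₁.leaves + t₂.leaves

/-- Well-weighted: each weight is 1 or 2, and weight 2 forbids a right son which is a leaf. -/
def WTree.wellWeighted : WTree → Prop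
  | .leaf => True
  | .node r t₁ t₂ => (r = 1 ∨ r = 2) ∧ (t₂ = .leaf → r = 1) ∧ t₁.wellWeighted ∧ t₂.wellWeighted

/-- The number of well-weighted binary trees with `n` leaves. -/
noncomputable def wwS (n : ℕ) : ℕ :=
  Nat.card {t : WTree // t.wellWeighted ∧ t.leaves = n}


def phi : SchTree → WTree
  | .leaf => .leaf
  | .node t₁ t₂ [] => .node 1 (phi t₁) (phi t₂)
  | .node t₁ t₂ (t :: ts) => .node 2 (phi t₁) (phi (.node t₂ t ts))
  termination_by t => sizeOf t
  decreasing_by all_goals simp <;> omega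

def psi : WTree → SchTree
  | .leaf => .leaf
  | .node 1 a b => .node (psi a) (psi b) []
  | .node _ a b =>
      match psi b with
      | .leaf => .node (psi a) .leaf []
      | .node u v ts => .node (psi a) u (v :: ts)

theorem psi_node_leaf (r : ℕ) (a b : WTree) (hr : r ≠ 1) (hb : psi b = .leaf) :
    psi (.node r a b) = .node (psi a) .leaf [] := by
  rw [psi.eq_def]
  rcases r with _ | _ | r
  · simp [hb]
  · exact absurd rfl hr
  · simp [hb]

theorem psi_node_node (r : ℕ) (a b : WTree) (u v : SchTree) (ts : List SchTree)
    (hr : r ≠ 1) (hb : psi b = .node u v ts) :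
    psi (.node r a b) = .node (psi a) u (v :: ts) := by
  rw [psi.eq_def]
  rcases r with _ | _ | r
  · simp [hb]
  · exact absurd rfl hr
  · simp [hb]

theorem psi_node_ne (r : ℕ) (a b : WTree) : psi (.node r a b) ≠ .leaf := by
  by_cases hr : r = 1
  · subst hr
    simp [show psi (.node 1 a b) = .node (psi a) (psi b) [] from rfl]
  · rcases h : psi b with _ | ⟨u, v, ts⟩
    · rw [psi_node_leaf r a b hr h]; simp
    · rw [psi_node_node r a b u v ts hr h]; simp

theorem phi_ne_leaf (t₁ t₂ : SchTree) (ts : List SchTree) :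
    phi (.node t₁ t₂ ts) ≠ .leaf := by
  cases ts <;> simp [phi]

theorem phi_leaves (t : SchTree) : (phi t).leaves = t.leaves := by
  induction t using phi.induct with
  | case1 => simp [phi, WTree.leaves, SchTree.leaves]
  | case2 t₁ t₂ h1 h2 => simp [phi, WTree.leaves, SchTree.leaves, SchTree.leavesList, h1, h2]
  | case3 t₁ t₂ t ts h1 h2 =>
      simp [phi, WTree.leaves, SchTree.leaves, SchTree.leavesList, h1, h2]
      omega

theorem phi_ww (t : SchTree) : (phi t).wellWeighted := by
  induction t using phi.induct with
  | case1 => simp [phi, WTree.wellWeighted]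
  | case2 t₁ t₂ h1 h2 =>
      simp only [phi]
      exact ⟨Or.inl rfl, fun _ => rfl, h1, h2⟩
  | case3 t₁ t₂ t ts h1 h2 =>
      simp only [phi]
      exact ⟨Or.inr rfl, fun h => absurd h (phi_ne_leaf _ _ _), h1, h2⟩

theorem psi_leaves (t : WTree) : (psi t).leaves = t.leaves := by
  induction t using psi.induct with
  | case1 => rfl
  | case2 a b h1 h2 =>
      simp [show psi (.node 1 a b) = .node (psi a) (psi b) [] from rfl,
        WTree.leaves, SchTree.leaves, SchTree.leavesList, h1, h2]
  | case3 r a b hr hb h1 h2 =>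
      rw [psi_node_leaf r a b (fun h => hr h) hb]
      rw [hb] at h1
      simp [WTree.leaves, SchTree.leaves, SchTree.leavesList, ← h1, h2]
  | case4 r a b hr u v ts hb h1 h2 =>
      rw [psi_node_node r a b u v ts (fun h => hr h) hb]
      rw [hb] at h1
      simp [WTree.leaves, SchTree.leaves, SchTree.leavesList, ← h1, h2]
      omega

theorem psi_phi (t : SchTree) : psi (phi t) = t := by
  induction t using phi.induct with
  | case1 => simp [phi, psi]
  | case2 t₁ t₂ h1 h2 =>
      simp only [phi]
      simp [show ∀ a b, psi (.node 1 a b) = .node (psi a) (psi b) [] from fun _ _ => rfl,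
        h1, h2]
  | case3 t₁ t₂ t ts h1 h2 =>
      simp only [phi]
      rw [psi_node_node 2 _ _ t₂ t ts (by omega) h2, h1]

theorem phi_psi (t : WTree) : t.wellWeighted → phi (psi t) = t := by
  induction t using psi.induct with
  | case1 => intro _; simp [psi, phi]
  | case2 a b h1 h2 =>
      rintro ⟨-, -, ha, hb⟩
      show phi (.node (psi a) (psi b) []) = _
      simp [phi, h1 ha, h2 hb]
  | case3 r a b hr hb h1 h2 =>
      rintro ⟨hr12, hbl, -, -⟩
      rcases b with _ | ⟨s, c, d⟩
      · exact absurd (hbl rfl) hr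
      · exact absurd hb (psi_node_ne _ _ _)
  | case4 r a b hr u v ts hb h1 h2 =>
      rintro ⟨hr12, hbl, ha, hbw⟩
      have hr2 : r = 2 := by rcases hr12 with h' | h' <;> [exact absurd h' (fun h => hr h); exact h']
      subst hr2
      rw [psi_node_node 2 a b u v ts (by omega) hb]
      simp only [phi, h2 ha]
      rw [← hb, h1 hbw]

/-- For every `n ≥ 1`, Schröder trees with `n` leaves are in bijection with
well-weighted binary trees with `n` leaves; in particular they are equinumerous. -/
theorem schroeder_equiv_wellWeighted (n : ℕ) (hn : 1 ≤ n) :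
    Nonempty ({t : SchTree // t.leaves = n} ≃
      {t : WTree // t.wellWeighted ∧ t.leaves = n}) ∧ schS n = wwS n := by
  have e : {t : SchTree // t.leaves = n} ≃ {t : WTree // t.wellWeighted ∧ t.leaves = n} :=
    { toFun := fun t => ⟨phi t.1, phi_ww t.1, by rw [phi_leaves, t.2]⟩
      invFun := fun t => ⟨psi t.1, by rw [psi_leaves, t.2.2]⟩
      left_inv := fun t => Subtype.ext (psi_phi t.1)
      right_inv := fun t => Subtype.ext (phi_psi t.1 t.2.1) }
  exact ⟨⟨e⟩, Nat.card_congr e⟩
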